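/- Let G be a finite group and W a finite-dimensional complex vector space carrying a representation of G. Then there exists a nonzero G-invariant complex subspace W' ⊆ W such that the subrepresentation W' admits a G-invariant quaternionic structure if and only if there exists a nonzero (possibly degenerate) G-invariant alternating ℂ-bilinear form on W. -/

import Mathlib

open Complex

namespace StmtThirteenAux

variable {G : Type*} [Group G] [Finite G]
variable {W : Type*} [AddCommGroup W] [Module ℂ W] [FiniteDimensional ℂ W]

lemma rho_mul_apply (ρ : Representation ℂ G W) (a b : G) (x : W) :
    ρ a (ρ b x) = ρ (a * b) x := by
  rw [map_mul]; rfl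

lemma rho_inv_cancel (ρ : Representation ℂ G W) (s : G) (x : W) :
    ρ s (ρ s⁻¹ x) = x := by
  rw [rho_mul_apply, mul_inv_cancel, map_one]; rfl

lemma exists_invariant_form (ρ : Representation ℂ G W) :
    ∃ h : W → W → ℂ,
      (∀ x y z, h (x + y) z = h x z + h y z) ∧
      (∀ (a : ℂ) (x y : W), h (a • x) y = (starRingEnd ℂ a) * h x y) ∧
      (∀ x y z, h x (y + z) = h x y + h x z) ∧
      (∀ (a : ℂ) (x y : W), h x (a • y) = a * h x y) ∧
      (∀ x y, starRingEnd ℂ (h x y) = h y x) ∧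
      (∀ x, 0 ≤ (h x x).re) ∧
      (∀ x, (h x x).im = 0) ∧
      (∀ x, h x x = 0 → x = 0) ∧
      (∀ (s : G) (x y : W), h (ρ s x) (ρ s y) = h x y) ∧
      (∀ f : W →ₗ[ℂ] ℂ, ∃ u, ∀ y, h u y = f y) := by
  classical
  haveI := Fintype.ofFinite G
  set b : Module.Basis (Fin (Module.finrank ℂ W)) ℂ W := Module.finBasis ℂ W with hb
  set e := b.equivFun with he
  set h₀ : W → W → ℂ := fun v w => ∑ i, starRingEnd ℂ (e v i) * e w i with hh₀
  set h : W → W → ℂ := fun v w => ∑ s : G, h₀ (ρ s v) (ρ s w) with hh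
  have h₀addl : ∀ v v' w, h₀ (v + v') w = h₀ v w + h₀ v' w := by
    intro v v' w
    simp [hh₀, map_add, add_mul, Finset.sum_add_distrib]
  have h₀addr : ∀ v w w', h₀ v (w + w') = h₀ v w + h₀ v w' := by
    intro v w w'
    simp [hh₀, map_add, mul_add, Finset.sum_add_distrib]
  have h₀smull : ∀ (a : ℂ) v w, h₀ (a • v) w = starRingEnd ℂ a * h₀ v w := by
    intro a v w
    simp [hh₀, map_smul, Finset.mul_sum, mul_assoc]
  have h₀smulr : ∀ (a : ℂ) v w, h₀ v (a • w) = a * h₀ v w := by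
    intro a v w
    simp only [hh₀, map_smul, Pi.smul_apply, smul_eq_mul, Finset.mul_sum]
    refine Finset.sum_congr rfl fun i _ => by ring
  have h₀conj : ∀ v w, starRingEnd ℂ (h₀ v w) = h₀ w v := by
    intro v w
    simp only [hh₀, map_sum, map_mul, Complex.conj_conj]
    refine Finset.sum_congr rfl fun i _ => by ring
  have h₀self : ∀ v, h₀ v v = ((∑ i, normSq (e v i) : ℝ) : ℂ) := by
    intro v
    rw [Complex.ofReal_sum]
    refine Finset.sum_congr rfl fun i _ => by rw [mul_comm, Complex.mul_conj]
  -- properties of h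
  refine ⟨h, ?_, ?_, ?_, ?_, ?_, ?_, ?_, ?_, ?_, ?_⟩
  · intro x y z; simp [hh, map_add, h₀addl, Finset.sum_add_distrib]
  · intro a x y; simp [hh, map_smul, h₀smull, Finset.mul_sum]
  · intro x y z; simp [hh, map_add, h₀addr, Finset.sum_add_distrib]
  · intro a x y; simp [hh, map_smul, h₀smulr, Finset.mul_sum]
  · intro x y; simp [hh, map_sum, h₀conj]
  · intro x
    rw [hh]
    simp only [h₀self]
    rw [← Complex.ofReal_sum]
    simp only [Complex.ofReal_re]
    exact Finset.sum_nonneg fun s _ => Finset.sum_nonneg fun i _ => normSq_nonneg _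
  · intro x
    rw [hh]
    simp only [h₀self]
    rw [← Complex.ofReal_sum]
    simp
  · intro x hx
    rw [hh] at hx
    simp only [h₀self] at hx
    rw [← Complex.ofReal_sum] at hx
    rw [Complex.ofReal_eq_zero] at hx
    have h1 : ∀ s : G, (∑ i, normSq (e (ρ s x) i)) = 0 := by
      intro s
      have := (Finset.sum_eq_zero_iff_of_nonneg (fun s _ => Finset.sum_nonneg fun i _ => normSq_nonneg _)).mp hx
      exact this s (Finset.mem_univ s)
    have h2 := h1 1
    have h3 : ∀ i, normSq (e (ρ (1 : G) x) i) = 0 := by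
      intro i
      have := (Finset.sum_eq_zero_iff_of_nonneg (fun i _ => normSq_nonneg _)).mp h2
      exact this i (Finset.mem_univ i)
    have h4 : e (ρ (1 : G) x) = 0 := by
      funext i
      exact normSq_eq_zero.mp (h3 i)
    have h5 : ρ (1 : G) x = 0 := by
      have := congrArg e.symm h4
      simpa using this
    rw [map_one] at h5
    simpa using h5
  · intro t x y
    rw [hh]
    simp only [rho_mul_apply]
    exact Fintype.sum_bijective (· * t) (Group.mulRight_bijective t)
      _ _ (fun s => rfl)
  · -- Riesz-type representation
    set C : W → W := fun v => e.symm (fun i => starRingEnd ℂ (e v i)) with hC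
    have hCapp : ∀ v, e (C v) = fun i => starRingEnd ℂ (e v i) := by
      intro v; rw [hC]; exact e.apply_symm_apply _
    have hCC : ∀ v, C (C v) = v := by
      intro v
      rw [hC]
      simp only [LinearEquiv.apply_symm_apply]
      have : (fun i => starRingEnd ℂ (starRingEnd ℂ (e v i))) = e v := by
        funext i; simp
      rw [this]
      exact e.symm_apply_apply v
    have hCadd : ∀ v w, C (v + w) = C v + C w := by
      intro v w
      apply e.injective
      rw [map_add, hCapp, hCapp, hCapp]
      funext i
      simp [map_add]
    have hCsmul : ∀ (a : ℂ) v, C (a • v) = starRingEnd ℂ a • C v := by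
      intro a v
      apply e.injective
      rw [map_smul, hCapp, hCapp]
      funext i
      simp [map_smul]
    -- bilinear form g
    have hsmul_l : ∀ (a : ℂ) (x y : W), h (a • x) y = starRingEnd ℂ a * h x y := by
      intro a x y; simp [hh, map_smul, h₀smull, Finset.mul_sum]
    have hadd_l : ∀ x y z, h (x + y) z = h x z + h y z := by
      intro x y z; simp [hh, map_add, h₀addl, Finset.sum_add_distrib]
    have hadd_r : ∀ x y z, h x (y + z) = h x y + h x z := by
      intro x y z; simp [hh, map_add, h₀addr, Finset.sum_add_distrib]
    have hsmul_r : ∀ (a : ℂ) (x y : W), h x (a • y) = a * h x y := by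
      intro a x y; simp [hh, map_smul, h₀smulr, Finset.mul_sum]
    have hdef : ∀ x, h x x = 0 → x = 0 := by
      intro x hx
      rw [hh] at hx
      simp only [h₀self] at hx
      rw [← Complex.ofReal_sum, Complex.ofReal_eq_zero] at hx
      have h1 : ∀ s : G, (∑ i, normSq (e (ρ s x) i)) = 0 := by
        intro s
        have := (Finset.sum_eq_zero_iff_of_nonneg (fun s _ => Finset.sum_nonneg fun i _ => normSq_nonneg _)).mp hx
        exact this s (Finset.mem_univ s)
      have h2 := h1 1
      have h3 : ∀ i, normSq (e (ρ (1 : G) x) i) = 0 := by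
        intro i
        have := (Finset.sum_eq_zero_iff_of_nonneg (fun i _ => normSq_nonneg _)).mp h2
        exact this i (Finset.mem_univ i)
      have h4 : e (ρ (1 : G) x) = 0 := by
        funext i
        exact normSq_eq_zero.mp (h3 i)
      have h5 : ρ (1 : G) x = 0 := by
        have := congrArg e.symm h4
        simpa using this
      rw [map_one] at h5
      simpa using h5
    set g : LinearMap.BilinForm ℂ W := LinearMap.mk₂ ℂ (fun v w => h (C v) w)
      (fun m₁ m₂ n => by
        show h (C (m₁ + m₂)) n = h (C m₁) n + h (C m₂) n
        rw [hCadd, hadd_l])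
      (fun c m n => by
        show h (C (c • m)) n = c • h (C m) n
        rw [hCsmul, hsmul_l]; simp)
      (fun m n₁ n₂ => hadd_r _ _ _)
      (fun c m n => by
        show h (C m) (c • n) = c • h (C m) n
        rw [hsmul_r]; simp) with hg
    have hgapp : ∀ v w, g v w = h (C v) w := fun v w => rfl
    have hgnd : g.Nondegenerate := by
      refine LinearMap.BilinForm.Nondegenerate.ofSeparatingLeft ?_
      intro m hm
      have h1 : h (C m) (C m) = 0 := hm (C m)
      have h2 : C m = 0 := hdef _ h1
      have := congrArg C h2
      rw [hCC] at this
      rw [this]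
      apply e.injective
      rw [hCapp]
      funext i
      simp [h2]
    intro f
    refine ⟨C ((g.toDual hgnd).symm f), fun y => ?_⟩
    have h1 : g ((g.toDual hgnd).symm f) y = f y :=
      LinearMap.BilinForm.apply_toDual_symm_apply (B := g) (hB := hgnd) f y
    rw [← h1, hgapp]

lemma exists_equivariant_proj (ρ : Representation ℂ G W) (p : Submodule ℂ W)
    (hinv : ∀ (s : G), ∀ x ∈ p, ρ s x ∈ p) :
    ∃ π : W →ₗ[ℂ] W, (∀ x, π x ∈ p) ∧ (∀ x ∈ p, π x = x) ∧
      ∀ (s : G) (x : W), π (ρ s x) = ρ s (π x) := by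
  classical
  haveI := Fintype.ofFinite G
  obtain ⟨q, hq⟩ := p.exists_isCompl
  set π₀ : W →ₗ[ℂ] W := p.subtype.comp (p.projectionOnto q hq) with hπ₀
  have hπ₀mem : ∀ x, π₀ x ∈ p := fun x => (p.projectionOnto q hq x).2
  have hπ₀fix : ∀ x ∈ p, π₀ x = x := by
    intro x hx
    have h1 := Submodule.linearProjOfIsCompl_apply_left hq ⟨x, hx⟩
    show ((p.projectionOnto q hq) x : W) = x
    rw [show (x : W) = ((⟨x, hx⟩ : p) : W) from rfl, h1]
  set π : W →ₗ[ℂ] W :=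
    ((Fintype.card G : ℂ)⁻¹) • ∑ s : G, (ρ s) ∘ₗ π₀ ∘ₗ (ρ s⁻¹) with hπ
  have hcard : (Fintype.card G : ℂ) ≠ 0 := by
    exact_mod_cast Fintype.card_ne_zero
  have hπapp : ∀ x, π x = (Fintype.card G : ℂ)⁻¹ • ∑ s : G, ρ s (π₀ (ρ s⁻¹ x)) := by
    intro x
    rw [hπ]
    simp [LinearMap.sum_apply]
  refine ⟨π, ?_, ?_, ?_⟩
  · intro x
    rw [hπapp]
    refine Submodule.smul_mem _ _ (Submodule.sum_mem _ fun s _ => ?_)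
    exact hinv s _ (hπ₀mem _)
  · intro x hx
    rw [hπapp]
    have h1 : ∀ s : G, ρ s (π₀ (ρ s⁻¹ x)) = x := by
      intro s
      rw [hπ₀fix _ (hinv s⁻¹ x hx), rho_inv_cancel]
    simp only [h1, Finset.sum_const, Finset.card_univ]
    rw [← Nat.cast_smul_eq_nsmul ℂ, inv_smul_smul₀ hcard]
  · intro t x
    rw [hπapp, hπapp, map_smul]
    congr 1
    rw [map_sum]
    refine Fintype.sum_bijective (fun s => t⁻¹ * s) (Group.mulLeft_bijective t⁻¹) _ _ fun s => ?_
    have h1 : ρ s⁻¹ (ρ t x) = ρ (t⁻¹ * s)⁻¹ x := by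
      rw [rho_mul_apply]
      congr 1
      group
    show (ρ s) (π₀ ((ρ s⁻¹) ((ρ t) x))) = (ρ t) ((ρ (t⁻¹ * s)) (π₀ ((ρ (t⁻¹ * s)⁻¹) x)))
    rw [h1, rho_mul_apply ρ t (t⁻¹ * s), mul_inv_cancel_left]

end StmtThirteenAux

open StmtThirteenAux

/-- For a finite-dimensional complex representation `W` of a finite group `G`,
there is a nonzero `G`-invariant subspace `W' ⊆ W` carrying a `G`-invariant quaternionic structure
(a conjugate-linear map of `W'` squaring to `−id` and commuting with the `G`-action) iff there is
a nonzero (possibly degenerate) `G`-invariant alternating bilinear form on `W`. -/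
theorem exists_quaternionic_type_subrep_iff_exists_invariant_alt_form
    {G : Type*} [Group G] [Finite G]
    {W : Type*} [AddCommGroup W] [Module ℂ W] [FiniteDimensional ℂ W]
    (ρ : Representation ℂ G W) :
    (∃ W' : Submodule ℂ W, W' ≠ ⊥ ∧ (∀ (s : G), ∀ x ∈ W', ρ s x ∈ W') ∧
      ∃ Q : W → W,
        (∀ x ∈ W', Q x ∈ W') ∧
        (∀ x ∈ W', ∀ y ∈ W', Q (x + y) = Q x + Q y) ∧
        (∀ (a : ℂ), ∀ x ∈ W', Q (a • x) = (starRingEnd ℂ a) • Q x) ∧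
        (∀ x ∈ W', Q (Q x) = -x) ∧
        (∀ (s : G), ∀ x ∈ W', Q (ρ s x) = ρ s (Q x))) ↔
      (∃ B : LinearMap.BilinForm ℂ W, B ≠ 0 ∧
        (∀ x : W, B x x = 0) ∧
        (∀ (s : G) (x y : W), B (ρ s x) (ρ s y) = B x y)) := by
  classical
  obtain ⟨h, h1, h2, h3, h4, h5, h6, h7, h8, h9, hriesz⟩ := exists_invariant_form ρ
  have hposgen : ∀ z : W, z ≠ 0 → 0 < (h z z).re := by
    intro z hz
    rcases (h6 z).lt_or_eq with hlt | heq
    · exact hlt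
    · exact absurd (h8 z (Complex.ext heq.symm (by simpa using h7 z))) hz
  have h0l : ∀ y, h 0 y = 0 := fun y => by
    rw [show (0 : W) = (0 : ℂ) • (0 : W) by simp, h2]; simp
  have h0r : ∀ y, h y 0 = 0 := fun y => by
    rw [show (0 : W) = (0 : ℂ) • (0 : W) by simp, h4]; simp
  have hnegl : ∀ v y, h (-v) y = - h v y := fun v y => by
    rw [show -v = (-1 : ℂ) • v by simp, h2]; simp
  have hsub_l : ∀ u v y, h (u - v) y = h u y - h v y := by
    intro u v y
    rw [sub_eq_add_neg, h1, hnegl, sub_eq_add_neg]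
  have hinj : ∀ u v : W, (∀ y, h u y = h v y) → u = v := by
    intro u v huv
    have e1 : h (u - v) (u - v) = 0 := by rw [hsub_l, huv, sub_self]
    exact sub_eq_zero.mp (h8 _ e1)
  have hrealself : ∀ v : W, h v v = ((h v v).re : ℂ) :=
    fun v => Complex.ext (by simp) (by simp [h7 v])
  constructor
  · rintro ⟨W', hW'ne, hWinv, Q, hQmem, hQadd, hQsmul, hQQ, hQcomm⟩
    obtain ⟨π, hπmem, hπfix, hπcomm⟩ := exists_equivariant_proj ρ W' hWinv
    refine ⟨LinearMap.mk₂ ℂ (fun x y => h (Q (π x)) (π y) - h (Q (π y)) (π x))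
      (fun m₁ m₂ n => by
        simp only [map_add]
        rw [hQadd _ (hπmem m₁) _ (hπmem m₂), h1, h3]
        ring)
      (fun a m n => by
        simp only [map_smul]
        rw [hQsmul a _ (hπmem m), h2, h4 a]
        simp only [Complex.conj_conj, smul_eq_mul]
        ring)
      (fun m n₁ n₂ => by
        simp only [map_add]
        rw [hQadd _ (hπmem n₁) _ (hπmem n₂), h3, h1]
        ring)
      (fun a m n => by
        simp only [map_smul]
        rw [h4 a, hQsmul a _ (hπmem n), h2]
        simp only [Complex.conj_conj, smul_eq_mul]
        ring), ?_, ?_, ?_⟩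
    · obtain ⟨x₀, hx₀mem, hx₀⟩ := (Submodule.ne_bot_iff W').mp hW'ne
      intro hc
      have heval := congrArg (fun (B : LinearMap.BilinForm ℂ W) => B x₀ (Q x₀)) hc
      simp only [LinearMap.mk₂_apply, LinearMap.zero_apply] at heval
      rw [hπfix _ hx₀mem, hπfix _ (hQmem _ hx₀mem), hQQ _ hx₀mem, hnegl,
        sub_neg_eq_add] at heval
      have hre := congrArg Complex.re heval
      simp only [Complex.add_re, Complex.zero_re] at hre
      have := hposgen x₀ hx₀
      have := h6 (Q x₀)
      linarith
    · intro x
      simp only [LinearMap.mk₂_apply]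
      exact sub_self _
    · intro s x y
      simp only [LinearMap.mk₂_apply]
      rw [hπcomm, hπcomm, hQcomm s _ (hπmem x), hQcomm s _ (hπmem y), h9, h9]
  · rintro ⟨B, hB0, halt, hBinv⟩
    have haltB : ∀ x y : W, B y x = - B x y := fun x y =>
      (LinearMap.IsAlt.neg halt x y).symm
    have hρρ := rho_inv_cancel ρ
    have hBinv' : ∀ (s : G) (x y : W), B (ρ s x) y = B x (ρ s⁻¹ y) := by
      intro s x y
      conv_lhs => rw [← hρρ s y]
      rw [hBinv]
    choose T hT using fun x => hriesz (B x)
    have hTadd : ∀ x y, T (x + y) = T x + T y := by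
      intro x y
      apply hinj
      intro z
      rw [hT, h1, hT, hT, map_add, LinearMap.add_apply]
    have hTsmul : ∀ (a : ℂ) x, T (a • x) = starRingEnd ℂ a • T x := by
      intro a x
      apply hinj
      intro z
      rw [hT, h2, hT, map_smul]
      simp
    have hTcomm : ∀ (s : G) x, T (ρ s x) = ρ s (T x) := by
      intro s x
      apply hinj
      intro z
      rw [hT, hBinv', ← hT]
      conv_rhs => rw [← hρρ s z]
      rw [h9]
    set S : Module.End ℂ W :=
      { toFun := fun x => T (T x)
        map_add' := fun x y => by
          show T (T (x + y)) = T (T x) + T (T y)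
          rw [hTadd, hTadd]
        map_smul' := fun a x => by
          show T (T (a • x)) = (RingHom.id ℂ) a • T (T x)
          rw [hTsmul, hTsmul]
          simp } with hSdef
    have hSapp : ∀ x, S x = T (T x) := fun _ => rfl
    have keyA : ∀ x y, h (T x) y = - h (T y) x := by
      intro x y
      rw [hT, hT, haltB x y]
      ring
    have keyB : ∀ x, h x (S x) = - h (T x) (T x) := by
      intro x
      have e1 : h (S x) x = - h (T x) (T x) := keyA (T x) x
      have e2 : h x (S x) = starRingEnd ℂ (h (S x) x) := (h5 _ _).symm
      rw [e2, e1, map_neg, h5]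
    have hBne : ∃ x y, B x y ≠ 0 := by
      by_contra hc
      push_neg at hc
      exact hB0 (LinearMap.ext fun x => LinearMap.ext fun y => by rw [hc]; rfl)
    obtain ⟨xb, yb, hxyb⟩ := hBne
    have hTxb : T xb ≠ 0 := by
      intro hc
      exact hxyb (by rw [← hT, hc, h0l])
    have hSxb : S xb ≠ 0 := by
      intro hc
      have e1 := keyB xb
      rw [hc, h0r] at e1
      have hq : h (T xb) (T xb) = 0 := by
        have := e1.symm
        rwa [neg_eq_zero] at this
      exact hTxb (h8 _ hq)
    set U := LinearMap.range S with hU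
    haveI : Nontrivial U := Submodule.nontrivial_iff_ne_bot.mpr (by
      rw [Submodule.ne_bot_iff]
      exact ⟨S xb, LinearMap.mem_range_self S xb, hSxb⟩)
    have hUinv : ∀ u ∈ U, S u ∈ U := fun u _ => LinearMap.mem_range_self S u
    obtain ⟨μ, hμ⟩ := Module.End.exists_eigenvalue (S.restrict hUinv)
    obtain ⟨v, hv⟩ := hμ.exists_hasEigenvector
    set x₀ : W := (v : W) with hx₀def
    have hx₀ : x₀ ≠ 0 := by
      simp only [hx₀def, ne_eq, Submodule.coe_eq_zero]
      exact hv.2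
    have hSx₀ : S x₀ = μ • x₀ := by
      have e1 := hv.apply_eq_smul
      have e2 := LinearMap.restrict_coe_apply S hUinv v
      rw [e1] at e2
      rw [hx₀def, ← e2]
      simp
    have hp0 : h x₀ x₀ ≠ 0 := fun hc => hx₀ (h8 _ hc)
    have hkey : μ * h x₀ x₀ = - h (T x₀) (T x₀) := by
      have e1 := keyB x₀
      rwa [hSx₀, h4] at e1
    have hμ0 : μ ≠ 0 := by
      intro hc
      rw [hc, zero_mul] at hkey
      have hq : h (T x₀) (T x₀) = 0 := by
        have := hkey.symm
        rwa [neg_eq_zero] at this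
      have hTx₀ : T x₀ = 0 := h8 _ hq
      obtain ⟨y₀, hy₀⟩ := v.2
      have e3 : h (S y₀) x₀ = 0 := by
        rw [hSapp, keyA, hTx₀, h0l, neg_zero]
      rw [hy₀] at e3
      exact hp0 e3
    set pr := (h x₀ x₀).re with hprdef
    set qr := (h (T x₀) (T x₀)).re with hqrdef
    have hpreal : h x₀ x₀ = (pr : ℂ) := hrealself x₀
    have hqreal : h (T x₀) (T x₀) = (qr : ℂ) := hrealself (T x₀)
    have hprpos : 0 < pr := hposgen x₀ hx₀
    have hprne : (pr : ℂ) ≠ 0 := by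
      exact_mod_cast ne_of_gt hprpos
    have hkey2 : μ * (pr : ℂ) = -(qr : ℂ) := by
      rw [← hpreal, ← hqreal]
      exact hkey
    have hμre : μ = ((-(qr / pr) : ℝ) : ℂ) := by
      push_cast
      field_simp
      linear_combination hkey2
    set m : ℝ := -(qr / pr) with hmdef
    have hmneg : m < 0 := by
      have hq0 : qr ≠ 0 := by
        intro hcq
        apply hμ0
        rw [hμre, hmdef, hcq]
        simp
      have hqpos : 0 < qr := lt_of_le_of_ne (h6 (T x₀)) (Ne.symm hq0)
      have := div_pos hqpos hprpos
      rw [hmdef]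
      linarith
    set W' := Module.End.eigenspace S μ with hW'def
    have hmem : ∀ {z : W}, z ∈ W' ↔ S z = μ • z := fun {z} =>
      Module.End.mem_eigenspace_iff
    have hconjμ : starRingEnd ℂ μ = μ := by
      rw [hμre]
      exact Complex.conj_ofReal _
    have hTmem : ∀ z ∈ W', T z ∈ W' := by
      intro z hz
      rw [hmem] at hz ⊢
      have e1 : S (T z) = T (S z) := rfl
      rw [e1, hz, hTsmul, hconjμ]
    have hρmem : ∀ (s : G), ∀ z ∈ W', ρ s z ∈ W' := by
      intro s z hz
      rw [hmem] at hz ⊢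
      have e1 : S (ρ s z) = ρ s (S z) := by
        show T (T (ρ s z)) = ρ s (T (T z))
        rw [hTcomm, hTcomm]
      rw [e1, hz, map_smul]
    set c : ℝ := (Real.sqrt (-m))⁻¹ with hcdef
    have hc2 : (c : ℂ) * (c : ℂ) * μ = -1 := by
      have hs : Real.sqrt (-m) * Real.sqrt (-m) = -m :=
        Real.mul_self_sqrt (by linarith)
      have hcc : c * c * m = -1 := by
        rw [hcdef, ← mul_inv, hs, inv_neg, neg_mul, inv_mul_cancel₀ (ne_of_lt hmneg)]
      rw [hμre, ← Complex.ofReal_mul, ← Complex.ofReal_mul, hcc]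
      simp
    refine ⟨W', ?_, hρmem, fun w => (c : ℂ) • T w, ?_, ?_, ?_, ?_, ?_⟩
    · rw [Submodule.ne_bot_iff]
      exact ⟨x₀, hmem.mpr hSx₀, hx₀⟩
    · intro z hz
      exact Submodule.smul_mem _ _ (hTmem z hz)
    · intro z hz y hy
      show (c : ℂ) • T (z + y) = (c : ℂ) • T z + (c : ℂ) • T y
      rw [hTadd, smul_add]
    · intro a z hz
      show (c : ℂ) • T (a • z) = starRingEnd ℂ a • ((c : ℂ) • T z)
      rw [hTsmul, smul_comm]
    · intro z hz
      show (c : ℂ) • T ((c : ℂ) • T z) = -z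
      have hz' : T (T z) = μ • z := hmem.mp hz
      rw [hTsmul, Complex.conj_ofReal, hz', smul_smul, smul_smul, hc2]
      simp
    · intro s z hz
      show (c : ℂ) • T (ρ s z) = ρ s ((c : ℂ) • T z)
      rw [hTcomm, map_smul]
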